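/- Let s > 3/2 and let Γ be a Hilbert–Schmidt operator on L²(ℝ³, ℂ⁴) such that (1-Δ)^{s/2} Γ (1-Δ)^{s/2} is Hilbert–Schmidt. Then the integral kernel Γ(x,y) of Γ, restricted to the diagonal x ↦ Γ(x,x), defines an element of H^s(ℝ³, ℂ^{4×4}), and there is a constant c depending only on s such that ‖Γ(·,·)‖_{H^s} ≤ c ‖(1-Δ)^{s/2} Γ (1-Δ)^{s/2}‖_{𝔖²}. -/

import Mathlib

open MeasureTheory ENNReal

noncomputable section

abbrev E3 := EuclideanSpace ℝ (Fin 3)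

/-- `4×4` complex matrices (with the sup norm coming from the Pi instances). -/
abbrev MT := Fin 4 → Fin 4 → ℂ

def wgt (s : ℝ) (ξ : E3) : ℝ≥0∞ := ENNReal.ofReal ((1 + ‖ξ‖ ^ 2) ^ s)

/-- Squared `𝔥^{a,b}` norm of a kernel given in Fourier variables:
`‖(1-Δ)^{a/2} Γ (1-Δ)^{b/2}‖²_{𝔖²} = ∬ (1+|p|²)^a (1+|q|²)^b ‖Γ̂(p,q)‖² dp dq`. -/
def hsKerSq (a b : ℝ) (Γ : E3 → E3 → MT) : ℝ≥0∞ :=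
  ∫⁻ p, ∫⁻ q, wgt a p * wgt b q * (‖Γ p q‖₊ : ℝ≥0∞) ^ 2

/-- Squared `H^s` norm of the diagonal density `x ↦ Γ(x,x)`, computed in Fourier
variables via `‖Γ(·,·)‖²_{H^s} ∼ ∫ (1+|k|²)^s ‖∫ Γ̂(p,k-p) dp‖² dk`. -/
def diagSq (s : ℝ) (Γ : E3 → E3 → MT) : ℝ≥0∞ :=
  ∫⁻ k, wgt s k * (‖∫ p, Γ p (k - p)‖₊ : ℝ≥0∞) ^ 2

namespace Stmt2Aux

lemma base_pos (ξ : E3) : (0:ℝ) < 1 + ‖ξ‖ ^ 2 := by positivity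

lemma wgt_meas (s : ℝ) : Measurable (wgt s) := by
  unfold wgt; fun_prop

lemma wgt_pos (s : ℝ) (ξ : E3) : 0 < wgt s ξ := by
  unfold wgt
  rw [ENNReal.ofReal_pos]
  exact Real.rpow_pos_of_pos (base_pos ξ) s

lemma wgt_ne_zero (s : ℝ) (ξ : E3) : wgt s ξ ≠ 0 := (wgt_pos s ξ).ne'

lemma wgt_ne_top (s : ℝ) (ξ : E3) : wgt s ξ ≠ ∞ := ENNReal.ofReal_ne_top

/-- Real version of the weight triangle inequality. -/
lemma real_wgt_add_le {s : ℝ} (hs : 0 ≤ s) (p q : E3) :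
    (1 + ‖p + q‖ ^ 2) ^ s ≤ 4 ^ s * ((1 + ‖p‖ ^ 2) ^ s + (1 + ‖q‖ ^ 2) ^ s) := by
  set a := 1 + ‖p‖ ^ 2 with ha
  set b := 1 + ‖q‖ ^ 2 with hb
  have hpa : (0:ℝ) < a := base_pos p
  have hpb : (0:ℝ) < b := base_pos q
  have hM : (1 + ‖p + q‖ ^ 2) ≤ 4 * max a b := by
    have h1 : ‖p + q‖ ≤ ‖p‖ + ‖q‖ := norm_add_le p q
    have h2 : a ≤ max a b := le_max_left a b
    have h3 : b ≤ max a b := le_max_right a b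
    have h4 : (0:ℝ) ≤ ‖p + q‖ := norm_nonneg _
    nlinarith [sq_nonneg (‖p‖ - ‖q‖), norm_nonneg p, norm_nonneg q]
  have hstep : (1 + ‖p + q‖ ^ 2) ^ s ≤ (4 * max a b) ^ s :=
    Real.rpow_le_rpow (by positivity) hM hs
  have hmul : (4 * max a b) ^ s = 4 ^ s * (max a b) ^ s :=
    Real.mul_rpow (by norm_num) (le_max_of_le_left hpa.le)
  have hmax : (max a b) ^ s ≤ a ^ s + b ^ s := by
    rcases max_cases a b with ⟨h, _⟩ | ⟨h, _⟩ <;> rw [h]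
    · nlinarith [Real.rpow_pos_of_pos hpb s]
    · nlinarith [Real.rpow_pos_of_pos hpa s]
  calc (1 + ‖p + q‖ ^ 2) ^ s ≤ 4 ^ s * (max a b) ^ s := by rw [← hmul]; exact hstep
    _ ≤ 4 ^ s * (a ^ s + b ^ s) := by
        have h4s : (0:ℝ) ≤ 4 ^ s := (Real.rpow_pos_of_pos (by norm_num) s).le
        nlinarith
  
lemma wgt_add_le {s : ℝ} (hs : 0 ≤ s) (p q : E3) :
    wgt s (p + q) ≤ ENNReal.ofReal (4 ^ s) * (wgt s p + wgt s q) := by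
  unfold wgt
  rw [← ENNReal.ofReal_add (by positivity) (by positivity),
    ← ENNReal.ofReal_mul (by positivity)]
  exact ENNReal.ofReal_le_ofReal (real_wgt_add_le hs p q)

/-- The key pointwise inequality for the weight quotient. -/
lemma wgt_quot_le {s : ℝ} (hs : 0 ≤ s) (p q : E3) :
    wgt s (p + q) * (wgt s p * wgt s q)⁻¹ ≤
      ENNReal.ofReal (4 ^ s) * ((wgt s p)⁻¹ + (wgt s q)⁻¹) := by
  set A := wgt s p
  set B := wgt s q
  set D := ENNReal.ofReal ((4:ℝ) ^ s)
  have hA0 : A ≠ 0 := wgt_ne_zero s p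
  have hB0 : B ≠ 0 := wgt_ne_zero s q
  have hAt : A ≠ ∞ := wgt_ne_top s p
  have hBt : B ≠ ∞ := wgt_ne_top s q
  have h1 : (A * B)⁻¹ = A⁻¹ * B⁻¹ := ENNReal.mul_inv (Or.inl hA0) (Or.inl hAt)
  calc wgt s (p + q) * (A * B)⁻¹
      ≤ (D * (A + B)) * (A⁻¹ * B⁻¹) := by
        rw [h1]; exact mul_le_mul_left (wgt_add_le hs p q) _
    _ = D * (A * A⁻¹ * B⁻¹ + B * B⁻¹ * A⁻¹) := by ring
    _ = D * (B⁻¹ + A⁻¹) := by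
        rw [ENNReal.mul_inv_cancel hA0 hAt, ENNReal.mul_inv_cancel hB0 hBt, one_mul, one_mul]
    _ = D * (A⁻¹ + B⁻¹) := by rw [add_comm]

lemma inv_wgt_eq (s : ℝ) (ξ : E3) :
    (wgt s ξ)⁻¹ = ENNReal.ofReal ((1 + ‖ξ‖ ^ 2) ^ (-s)) := by
  rw [wgt, Real.rpow_neg (base_pos ξ).le,
    ENNReal.ofReal_inv_of_pos (Real.rpow_pos_of_pos (base_pos ξ) s)]

lemma I_lt_top {s : ℝ} (hs : 3 / 2 < s) : (∫⁻ ξ : E3, (wgt s ξ)⁻¹) < ∞ := by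
  have hint : Integrable (fun ξ : E3 => ((1:ℝ) + ‖ξ‖ ^ 2) ^ (-(2 * s) / 2)) :=
    integrable_rpow_neg_one_add_norm_sq (by simp; linarith)
  have he : -(2 * s) / 2 = -s := by ring
  rw [he] at hint
  simp_rw [inv_wgt_eq]
  exact hint.lintegral_lt_top

end Stmt2Aux

open Stmt2Aux in
/-- Let `s > 3/2` and let `Γ` be Hilbert–Schmidt with `(1-Δ)^{s/2}Γ(1-Δ)^{s/2}`
Hilbert–Schmidt.  Then the diagonal `x ↦ Γ(x,x)` belongs to `H^s` and
`‖Γ(·,·)‖_{H^s} ≤ c ‖Γ‖_{𝔥^s}` with `c` depending only on `s` (stated for squared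
norms, in Fourier variables). -/
theorem stmt_2 (s : ℝ) (hs : 3 / 2 < s) :
    ∃ c > (0 : ℝ), ∀ Γ : E3 → E3 → MT,
      Measurable (fun pq : E3 × E3 => Γ pq.1 pq.2) →
      diagSq s Γ ≤ ENNReal.ofReal (c ^ 2) * hsKerSq s s Γ := by
  have hs0 : (0:ℝ) ≤ s := by linarith
  set I : ℝ≥0∞ := ∫⁻ ξ : E3, (wgt s ξ)⁻¹ with hI
  set C : ℝ≥0∞ := ENNReal.ofReal (4 ^ s) * (I + I) with hCdef
  have hIt : I ≠ ∞ := (I_lt_top hs).ne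
  have hC : C ≠ ∞ := by
    rw [hCdef]
    exact ENNReal.mul_ne_top ENNReal.ofReal_ne_top (by simp [ENNReal.add_ne_top, hIt])
  refine ⟨Real.sqrt C.toReal + 1, by positivity, ?_⟩
  intro Γ mΓ
  have hCle : C ≤ ENNReal.ofReal ((Real.sqrt C.toReal + 1) ^ 2) := by
    calc C = ENNReal.ofReal C.toReal := (ENNReal.ofReal_toReal hC).symm
      _ ≤ ENNReal.ofReal ((Real.sqrt C.toReal + 1) ^ 2) := by
          apply ENNReal.ofReal_le_ofReal
          nlinarith [Real.sq_sqrt (ENNReal.toReal_nonneg (a := C)),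
            Real.sqrt_nonneg C.toReal]
  suffices h : diagSq s Γ ≤ C * hsKerSq s s Γ by
    exact h.trans (mul_le_mul_left hCle _)
  -- pointwise (in `k`) Cauchy–Schwarz estimate
  have key : ∀ k : E3, wgt s k * (‖∫ p, Γ p (k - p)‖₊ : ℝ≥0∞) ^ 2 ≤
      C * ∫⁻ p, wgt s p * wgt s (k - p) * (‖Γ p (k - p)‖₊ : ℝ≥0∞) ^ 2 := by
    intro k
    set F : E3 → ℝ≥0∞ := fun p => (‖Γ p (k - p)‖₊ : ℝ≥0∞) with hFdef
    set G : E3 → ℝ≥0∞ := fun p => wgt s p * wgt s (k - p) with hGdef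
    have hmap : Measurable fun p : E3 => (p, k - p) :=
      measurable_id.prodMk (measurable_const.sub measurable_id)
    have hF : Measurable F := (mΓ.comp hmap).enorm
    have hG : Measurable G :=
      (wgt_meas s).mul ((wgt_meas s).comp (measurable_const.sub measurable_id))
    have hG0 : ∀ p, G p ≠ 0 := fun p =>
      mul_ne_zero (wgt_ne_zero s p) (wgt_ne_zero s (k - p))
    have hGt : ∀ p, G p ≠ ∞ := fun p =>
      ENNReal.mul_ne_top (wgt_ne_top s p) (wgt_ne_top s (k - p))
    -- Cauchy–Schwarz
    have hCS : (∫⁻ p, F p) ^ 2 ≤ (∫⁻ p, G p * F p ^ 2) * ∫⁻ p, (G p)⁻¹ := by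
      have hconj : Real.HolderConjugate 2 2 := ⟨by norm_num, by norm_num, by norm_num⟩
      have hH := ENNReal.lintegral_mul_le_Lp_mul_Lq volume hconj
        (f := fun p => G p ^ (1/2 : ℝ) * F p) (g := fun p => G p ^ (-(1/2) : ℝ))
        ((hG.pow_const _).mul hF).aemeasurable (hG.pow_const _).aemeasurable
      have hfg : ∀ p, (fun p => G p ^ (1/2 : ℝ) * F p) p * (fun p => G p ^ (-(1/2) : ℝ)) p
          = F p := by
        intro p
        have : G p ^ (1/2 : ℝ) * G p ^ (-(1/2) : ℝ) = 1 := by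
          rw [← ENNReal.rpow_add _ _ (hG0 p) (hGt p)]
          norm_num
        calc G p ^ (1/2 : ℝ) * F p * G p ^ (-(1/2) : ℝ)
            = G p ^ (1/2 : ℝ) * G p ^ (-(1/2) : ℝ) * F p := by ring
          _ = F p := by rw [this, one_mul]
      have h1 : ∀ p, ((fun p => G p ^ (1/2 : ℝ) * F p) p) ^ (2:ℝ) = G p * F p ^ 2 := by
        intro p
        rw [ENNReal.mul_rpow_of_nonneg _ _ (by norm_num : (0:ℝ) ≤ 2),
          ← ENNReal.rpow_natCast (F p) 2, ← ENNReal.rpow_mul]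
        norm_num
      have h2 : ∀ p, ((fun p => G p ^ (-(1/2) : ℝ)) p) ^ (2:ℝ) = (G p)⁻¹ := by
        intro p
        rw [← ENNReal.rpow_mul]
        norm_num [ENNReal.rpow_neg_one]
      simp only [Pi.mul_apply] at hH
      rw [lintegral_congr hfg] at hH
      simp only [h1, h2] at hH
      calc (∫⁻ p, F p) ^ 2
          ≤ ((∫⁻ p, G p * F p ^ 2) ^ (1/(2:ℝ)) * (∫⁻ p, (G p)⁻¹) ^ (1/(2:ℝ))) ^ 2 :=
            pow_le_pow_left' hH 2
        _ = (∫⁻ p, G p * F p ^ 2) * ∫⁻ p, (G p)⁻¹ := by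
            rw [mul_pow, ← ENNReal.rpow_natCast (_ ^ (1/(2:ℝ))) 2,
              ← ENNReal.rpow_natCast ((∫⁻ p, (G p)⁻¹) ^ (1/(2:ℝ))) 2,
              ← ENNReal.rpow_mul, ← ENNReal.rpow_mul]
            norm_num
    -- the weight bound
    have hWB : wgt s k * ∫⁻ p, (G p)⁻¹ ≤ C := by
      calc wgt s k * ∫⁻ p, (G p)⁻¹
          = ∫⁻ p, wgt s k * (G p)⁻¹ := (lintegral_const_mul' _ _ (wgt_ne_top s k)).symm
        _ ≤ ∫⁻ p, ENNReal.ofReal (4 ^ s) * ((wgt s p)⁻¹ + (wgt s (k - p))⁻¹) := by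
            refine lintegral_mono fun p => ?_
            have := wgt_quot_le hs0 p (k - p)
            rwa [add_sub_cancel] at this
        _ = ENNReal.ofReal (4 ^ s) *
              ∫⁻ p, ((wgt s p)⁻¹ + (wgt s (k - p))⁻¹) :=
            lintegral_const_mul' _ _ ENNReal.ofReal_ne_top
        _ = C := by
            rw [hCdef]
            congr 1
            rw [lintegral_add_left (f := fun p => (wgt s p)⁻¹) ((wgt_meas s).inv)]
            congr 1
            exact (Measure.measurePreserving_sub_left volume k).lintegral_comp
              ((wgt_meas s).inv)
    -- combine
    have hN : (‖∫ p, Γ p (k - p)‖₊ : ℝ≥0∞) ≤ ∫⁻ p, F p :=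
      enorm_integral_le_lintegral_enorm _
    calc wgt s k * (‖∫ p, Γ p (k - p)‖₊ : ℝ≥0∞) ^ 2
        ≤ wgt s k * ((∫⁻ p, G p * F p ^ 2) * ∫⁻ p, (G p)⁻¹) :=
          mul_le_mul_right ((pow_le_pow_left' hN 2).trans hCS) _
      _ = (wgt s k * ∫⁻ p, (G p)⁻¹) * ∫⁻ p, G p * F p ^ 2 := by ring
      _ ≤ C * ∫⁻ p, G p * F p ^ 2 := mul_le_mul_left hWB _
  -- integrate in `k`, swap, translate
  have hmeasProd : AEMeasurable
      (Function.uncurry fun k p : E3 => wgt s p * wgt s (k - p) * (‖Γ p (k - p)‖₊ : ℝ≥0∞) ^ 2)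
      ((volume : Measure E3).prod volume) := by
    have hmap : Measurable fun z : E3 × E3 => (z.2, z.1 - z.2) :=
      measurable_snd.prodMk (measurable_fst.sub measurable_snd)
    exact ((((wgt_meas s).comp measurable_snd).mul
      ((wgt_meas s).comp (measurable_fst.sub measurable_snd))).mul
      (((mΓ.comp hmap).enorm).pow_const 2)).aemeasurable
  have hswap : (∫⁻ k, ∫⁻ p, wgt s p * wgt s (k - p) * (‖Γ p (k - p)‖₊ : ℝ≥0∞) ^ 2)
      = hsKerSq s s Γ := by
    rw [lintegral_lintegral_swap hmeasProd]
    refine lintegral_congr fun p => ?_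
    exact lintegral_sub_right_eq_self
      (fun q => wgt s p * wgt s q * (‖Γ p q‖₊ : ℝ≥0∞) ^ 2) p
  calc diagSq s Γ
      ≤ ∫⁻ k, C * ∫⁻ p, wgt s p * wgt s (k - p) * (‖Γ p (k - p)‖₊ : ℝ≥0∞) ^ 2 :=
        lintegral_mono key
    _ = C * ∫⁻ k, ∫⁻ p, wgt s p * wgt s (k - p) * (‖Γ p (k - p)‖₊ : ℝ≥0∞) ^ 2 :=
        lintegral_const_mul' _ _ hC
    _ = C * hsKerSq s s Γ := by rw [hswap]

end
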